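/- For nonzero real numbers k and c, the unit normal n = ((p_{k,c})_x × (p_{k,c})_y)/‖(p_{k,c})_x × (p_{k,c})_y‖ of the surface p_{k,c}(x,y) = (x, y, c e^{kx} cos ky) is quasi-rotationally equivariant: for all (x,y) ∈ ℝ² and all α ∈ ℝ one has n(x, y + α) = R_{−kα}( n(x,y) ), where R_φ is the rotation of ℝ³ about the z-axis by angle φ. -/

import Mathlib

noncomputable section

/-- Cross product on ℝ³ represented as `ℝ × ℝ × ℝ`. -/
def cross3 (u v : ℝ × ℝ × ℝ) : ℝ × ℝ × ℝ :=
  (u.2.1 * v.2.2 - u.2.2 * v.2.1,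
   u.2.2 * v.1 - u.1 * v.2.2,
   u.1 * v.2.1 - u.2.1 * v.1)

/-- Dot product on ℝ³. -/
def dot3 (u v : ℝ × ℝ × ℝ) : ℝ :=
  u.1 * v.1 + u.2.1 * v.2.1 + u.2.2 * v.2.2

/-- Euclidean norm on ℝ³. -/
def norm3 (u : ℝ × ℝ × ℝ) : ℝ := Real.sqrt (dot3 u u)

/-- Rotation of ℝ³ about the z-axis by angle `φ`. -/
def Rz (φ : ℝ) (v : ℝ × ℝ × ℝ) : ℝ × ℝ × ℝ :=
  (v.1 * Real.cos φ - v.2.1 * Real.sin φ,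
   v.1 * Real.sin φ + v.2.1 * Real.cos φ, v.2.2)

/-- For nonzero `k, c`, the unit normal of `p_{k,c}(x,y) = (x, y, c e^{kx} cos ky)` is
quasi-rotationally equivariant: `n(x, y + α) = R_{−kα}(n(x,y))` for all `(x,y)` and `α`. -/
theorem stmt_15 (k c : ℝ) (hk : k ≠ 0) (hc : c ≠ 0) :
    let p : ℝ → ℝ → ℝ × ℝ × ℝ :=
      fun s t => (s, t, c * Real.exp (k * s) * Real.cos (k * t))
    let n : ℝ → ℝ → ℝ × ℝ × ℝ := fun s t =>
      let px := deriv (fun s' => p s' t) s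
      let py := deriv (fun t' => p s t') t
      (norm3 (cross3 px py))⁻¹ • cross3 px py
    ∀ x y α : ℝ, n x (y + α) = Rz (-(k * α)) (n x y) := by
  intro p n x y α
  have hdx : ∀ t : ℝ, deriv (fun s' => p s' t) x
      = (1, 0, c * Real.exp (k * x) * k * Real.cos (k * t)) := by
    intro t
    have h : HasDerivAt (fun s' => p s' t)
        (1, 0, c * Real.exp (k * x) * k * Real.cos (k * t)) x := by
      refine HasDerivAt.prodMk (hasDerivAt_id x) (HasDerivAt.prodMk (hasDerivAt_const x t) ?_)
      have := ((((hasDerivAt_id x).const_mul k).exp).const_mul c).mul_const (Real.cos (k * t))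
      refine this.congr_deriv ?_
      simp only [id_eq]
      ring
    exact h.deriv
  have hdy : ∀ t : ℝ, deriv (fun t' => p x t') t
      = (0, 1, -(c * Real.exp (k * x) * k * Real.sin (k * t))) := by
    intro t
    have h : HasDerivAt (fun t' => p x t')
        (0, 1, -(c * Real.exp (k * x) * k * Real.sin (k * t))) t := by
      refine HasDerivAt.prodMk (hasDerivAt_const t x) (HasDerivAt.prodMk (hasDerivAt_id t) ?_)
      have := (((hasDerivAt_id t).const_mul k).cos).const_mul (c * Real.exp (k * x))
      refine this.congr_deriv ?_
      simp only [id_eq]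
      ring
    exact h.deriv
  set m : ℝ := c * Real.exp (k * x) * k with hm
  have hcross : ∀ t : ℝ,
      cross3 (deriv (fun s' => p s' t) x) (deriv (fun t' => p x t') t)
        = (-(m * Real.cos (k * t)), m * Real.sin (k * t), 1) := by
    intro t
    rw [hdx t, hdy t]
    simp [cross3]
  have hnorm : ∀ t : ℝ,
      norm3 (-(m * Real.cos (k * t)), m * Real.sin (k * t), 1) = Real.sqrt (m ^ 2 + 1) := by
    intro t
    unfold norm3 dot3
    congr 1
    dsimp only
    have := Real.sin_sq_add_cos_sq (k * t)
    nlinarith [this]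
  show (norm3 (cross3 _ _))⁻¹ • cross3 _ _ = Rz (-(k * α)) ((norm3 (cross3 _ _))⁻¹ • cross3 _ _)
  rw [hcross (y + α), hcross y, hnorm (y + α), hnorm y]
  have hca : Real.cos (k * (y + α)) = Real.cos (k * y) * Real.cos (k * α)
      - Real.sin (k * y) * Real.sin (k * α) := by
    rw [mul_add, Real.cos_add]
  have hsa : Real.sin (k * (y + α)) = Real.sin (k * y) * Real.cos (k * α)
      + Real.cos (k * y) * Real.sin (k * α) := by
    rw [mul_add, Real.sin_add]
  simp [Rz, Prod.smul_def, smul_eq_mul, Real.cos_neg, Real.sin_neg, hca, hsa]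
  constructor <;> ring
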